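/- For every list I of n distinct integers, φ(I) = φ(st(I)), where st(I) is the standardization of I. -/

import Mathlib

/-- The minimum of `a :: l` (computed by folding `min`) is a member of `a :: l`. -/
lemma foldr_min_mem (a : ℤ) : ∀ l : List ℤ, l.foldr min a ∈ a :: l := by
  intro l
  induction l with
  | nil => simp
  | cons b l ih =>
    simp only [List.foldr_cons]
    rcases min_choice b (l.foldr min a) with h | h
    · rw [h]; simp
    · rw [h]
      rcases List.mem_cons.mp ih with h' | h'
      · simp [h']
      · simp [h']

/-- The planar binary tree `φ(I)` associated to a list `I` of (distinct) integers:
`φ` of the empty list is the empty tree `|`, and `φ(I) = φ(I₁) ∨ φ(I₂)` where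
`I = I₁ · (min I) · I₂` is the splitting of `I` at its minimal entry. -/
def phi : List ℤ → Tree Unit
  | [] => Tree.nil
  | a :: l =>
    Tree.node ()
      (phi ((a :: l).take ((a :: l).idxOf (l.foldr min a))))
      (phi ((a :: l).drop ((a :: l).idxOf (l.foldr min a) + 1)))
termination_by l => l.length
decreasing_by
  · have hm := foldr_min_mem a l
    have hk := List.idxOf_lt_length_of_mem hm
    simp only [List.length_take, List.length_cons] at *
    try simp only [List.foldr_attach] at *
    omega
  · simp only [List.length_drop, List.length_cons]
    omega

/-- The standardization of a list `I` of distinct integers: the list whose `j`-th entry is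
the (1-indexed) position of `I_j` in the increasing ordering of the entries of `I`. -/
def stdz (I : List ℤ) : List ℤ :=
  I.map (fun x => ((I.filter (fun y => y < x)).length : ℤ) + 1)

/-- `l` is (the list of values of) a permutation of `{1, …, n}`. -/
def IsPermList (n : ℕ) (l : List ℤ) : Prop :=
  l.Perm ((List.range n).map (fun k => (k : ℤ) + 1))

/-- `S_T`: the set of permutations `σ ∈ S_{|T|}` (identified with their lists of values
`(σ(1),…,σ(n))`) such that `φ(σ) = T`. -/
def STree (T : Tree Unit) : Set (List ℤ) :=
  {l | IsPermList T.numNodes l ∧ phi l = T}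

set_option linter.unusedVariables false in
lemma foldr_min_le (a : ℤ) (l : List ℤ) : ∀ x ∈ a :: l, l.foldr min a ≤ x := by
  induction l with
  | nil => intro x hx; simp at hx; simp [hx]
  | cons b l ih =>
    intro x hx
    simp only [List.foldr_cons]
    rcases List.mem_cons.mp hx with h | h
    · subst h; exact le_trans (min_le_right _ _) (ih x (by simp))
    · rcases List.mem_cons.mp h with h' | h'
      · exact h' ▸ min_le_left _ _
      · exact le_trans (min_le_right _ _) (ih x (by simp [h']))

lemma indexOf_lt_ne {L : List ℤ} {x : ℤ} : ∀ j (hj : j < L.idxOf x) (hjl : j < L.length), L[j] ≠ x := by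
  induction L with
  | nil => intro j hj hjl; simp at hjl
  | cons a L ih =>
    intro j hj hjl
    by_cases hax : a = x
    · simp [List.idxOf_cons, hax] at hj
    · have hbe : (a == x) = false := by simp [hax]
      rw [List.idxOf_cons, hbe, cond_false] at hj
      cases j with
      | zero => simpa using hax
      | succ j =>
        simp only [List.getElem_cons_succ]
        exact ih j (by omega) (by simpa using hjl)

lemma indexOf_eq_of {x : ℤ} : ∀ (L : List ℤ) (k : ℕ) (hk : k < L.length), L[k] = x →
    (∀ j (hj : j < k), L[j]'(lt_trans hj hk) ≠ x) → L.idxOf x = k := by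
  intro L
  induction L with
  | nil => intro k hk; simp at hk
  | cons a L ih =>
    intro k hk h1 h2
    cases k with
    | zero =>
      simp only [List.getElem_cons_zero] at h1
      simp [List.idxOf_cons, h1]
    | succ k =>
      have ha : a ≠ x := by have := h2 0 (by omega); simpa using this
      have hbe : (a == x) = false := by simp [ha]
      rw [List.idxOf_cons, hbe, cond_false]
      have := ih k (by simpa using hk) (by simpa using h1)
        (fun j hj => by have := h2 (j+1) (by omega); simpa using this)
      omega

lemma filter_len_lt {x : ℤ} {p q : ℤ → Bool} (hpq : ∀ z, p z = true → q z = true)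
    (hqx : q x = true) (hpx : p x = false) :
    ∀ (l : List ℤ), x ∈ l → (l.filter p).length < (l.filter q).length := by
  intro l
  induction l with
  | nil => simp
  | cons a l ih =>
    intro hx
    rcases List.mem_cons.mp hx with h | h
    · subst h
      simp only [List.filter_cons, hqx, hpx, if_true, Bool.false_eq_true, if_false,
        List.length_cons]
      have := List.Sublist.length_le (List.monotone_filter_right l hpq)
      omega
    · have hlt := ih h
      rcases hpa : p a with _ | _
      · rcases hqa : q a with _ | _
        · simpa [List.filter_cons, hpa, hqa] using hlt
        · simp only [List.filter_cons, hpa, hqa, if_true, Bool.false_eq_true, if_false,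
            List.length_cons]
          omega
      · have hq := hpq a hpa
        simp only [List.filter_cons, hpa, hq, if_true, List.length_cons]
        omega

lemma phi_congr (n : ℕ) : ∀ (I J : List ℤ), I.length = n → J.length = n →
    (∀ i j (hi : i < I.length) (hj : j < I.length) (hi' : i < J.length) (hj' : j < J.length),
      I[i] < I[j] ↔ J[i] < J[j]) → phi I = phi J := by
  induction n using Nat.strong_induction_on with
  | _ n IH =>
    intro I J hIn hJn hEq
    cases I with
    | nil =>
      cases J with
      | nil => rfl
      | cons b m => simp at hIn hJn; omega
    | cons a l =>
      cases J with
      | nil => simp at hIn hJn; omega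
      | cons b m =>
        set L := a :: l with hL
        set M := b :: m with hM
        have hLM : M.length = L.length := by omega
        set k := L.idxOf (l.foldr min a) with hkdef
        have hkmem : l.foldr min a ∈ L := foldr_min_mem a l
        have hk : k < L.length := List.idxOf_lt_length_iff.mpr hkmem
        have hLk : L[k] = l.foldr min a := List.getElem_idxOf hk
        have hLmin : ∀ j (hj : j < L.length), L[k] ≤ L[j] := by
          intro j hj
          rw [hLk]
          exact foldr_min_le a l _ (List.getElem_mem hj)
        have hLlt : ∀ j (hj : j < k), L[k] < L[j]'(lt_trans hj hk) := by
          intro j hj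
          refine lt_of_le_of_ne (hLmin j (lt_trans hj hk)) ?_
          have := indexOf_lt_ne (L := L) (x := l.foldr min a) j hj (lt_trans hj hk)
          rw [hLk]
          exact fun h => this h.symm
        have hkM : k < M.length := by omega
        have hMmin : ∀ j (hj : j < M.length), M[k] ≤ M[j] := by
          intro j hj
          by_contra hc
          push_neg at hc
          have := (hEq j k (by omega) (by omega) hj hkM).mpr hc
          exact absurd this (not_lt.mpr (hLmin j (by omega)))
        have hMlt : ∀ j (hj : j < k), M[k] < M[j]'(lt_trans hj hkM) := by
          intro j hj
          exact (hEq k j hk (lt_trans hj hk) hkM (lt_trans hj hkM)).mp (hLlt j hj)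
        have hMminval : m.foldr min b = M[k] := by
          obtain ⟨j, hj, hjval⟩ := List.mem_iff_getElem.mp (foldr_min_mem b m)
          exact le_antisymm (foldr_min_le b m _ (List.getElem_mem hkM))
            (hjval ▸ hMmin j hj)
        have hMidx : M.idxOf (m.foldr min b) = k := by
          refine indexOf_eq_of M k hkM hMminval.symm ?_
          intro j hj
          rw [← hMminval] at hMlt
          exact fun h => absurd (h ▸ hMlt j hj) (lt_irrefl _)
        have hphiL : phi L = Tree.node () (phi (L.take k)) (phi (L.drop (k+1))) := by
          rw [hL, phi]
        have hphiM : phi M = Tree.node () (phi (M.take k)) (phi (M.drop (k+1))) := by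
          rw [hM, phi]
          rw [← hM, hMidx]
        rw [hphiL, hphiM]
        have hn1 : 1 ≤ n := by simp [hL] at hIn; omega
        congr 1
        · refine IH k (by omega) _ _ ?_ ?_ ?_
          · simp [List.length_take]; omega
          · simp [List.length_take]; omega
          · intro i j hi hj hi' hj'
            simp only [List.length_take] at hi hj hi' hj'
            rw [List.getElem_take, List.getElem_take, List.getElem_take, List.getElem_take]
            exact hEq i j (by omega) (by omega) (by omega) (by omega)
        · refine IH (n - (k+1)) (by omega) _ _ ?_ ?_ ?_
          · simp [List.length_drop]; omega
          · simp [List.length_drop]; omega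
          · intro i j hi hj hi' hj'
            simp only [List.length_drop] at hi hj hi' hj'
            rw [List.getElem_drop, List.getElem_drop, List.getElem_drop, List.getElem_drop]
            exact hEq (k+1+i) (k+1+j) (by omega) (by omega) (by omega) (by omega)

/-- For every list `I` of distinct integers, `φ(I) = φ(st(I))` where `st(I)` is the
standardization of `I`. -/
theorem phi_stdz (I : List ℤ) (hI : I.Nodup) : phi I = phi (stdz I) := by
  refine phi_congr I.length I (stdz I) rfl (by simp [stdz]) ?_
  intro i j hi hj hi' hj'
  simp only [stdz, List.getElem_map]
  have key : ∀ x y : ℤ, x ∈ I → x < y →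
      (I.filter (fun z => z < x)).length < (I.filter (fun z => z < y)).length := by
    intro x y hx hxy
    refine filter_len_lt ?_ ?_ ?_ I hx
    · intro z hz; simp at hz ⊢; omega
    · simp [hxy]
    · simp
  constructor
  · intro h
    have := key I[i] I[j] (List.getElem_mem hi) h
    omega
  · intro h
    by_contra hc
    push_neg at hc
    rcases eq_or_lt_of_le hc with heq | hlt
    · rw [heq] at h
      omega
    · have := key I[j] I[i] (List.getElem_mem hj) hlt
      omega
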